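/- Let G be a finite Abelian group. The Cayley table of G admits a 1-weight if and only if G does not have a unique involution. Equivalently, the Cayley table of G has a 1-weight or every near 1-weight of it is maximal, but not both. -/

import Mathlib

/-- A `k`-weight of the Cayley table of an additive group `G`
(the latin square with symbol `x + y` in cell `(x, y)`):
all row, column, and symbol sums equal `k`. -/
def IsCayleyWeight {G : Type*} [AddCommGroup G] [Fintype G] (θ : G × G → ℤ) (k : ℤ) : Prop :=
  (∀ x : G, ∑ y : G, θ (x, y) = k) ∧ (∀ y : G, ∑ x : G, θ (x, y) = k) ∧
  (∀ z : G, ∑ x : G, θ (x, z - x) = k)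

/-- A near `1`-weight of the Cayley table of `G` missing row `r`, column `c`
and symbol `s`: all row, column, and symbol sums are `1`, except those at
`r`, `c`, `s`, which are `0`. -/
def IsNearOneWeight {G : Type*} [AddCommGroup G] [Fintype G] [DecidableEq G]
    (θ : G × G → ℤ) (r c s : G) : Prop :=
  (∀ x : G, ∑ y : G, θ (x, y) = if x = r then 0 else 1) ∧
  (∀ y : G, ∑ x : G, θ (x, y) = if y = c then 0 else 1) ∧
  (∀ z : G, ∑ x : G, θ (x, z - x) = if z = s then 0 else 1)

open Finset

section Aux

variable {G : Type*} [AddCommGroup G] [Fintype G] [DecidableEq G]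

/-! ### The sum of all elements of `G` -/

lemma cw_sum_filter_not :
    ∑ g ∈ univ.filter (fun g : G => ¬ (g + g = 0)), g = 0 := by
  refine Finset.sum_involution (fun a _ => -a) (fun a _ => add_neg_cancel a) ?_ ?_
    (fun a _ => neg_neg a)
  · intro a ha _ h
    exact (Finset.mem_filter.mp ha).2 (neg_eq_iff_add_eq_zero.mp h)
  · intro a ha
    simp only [Finset.mem_filter, Finset.mem_univ, true_and] at ha ⊢
    intro h
    apply ha
    exact neg_eq_zero.mp (by rw [← neg_add] at h; exact h)

lemma cw_sum_univ_eq_sum_filter :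
    ∑ g : G, g = ∑ g ∈ univ.filter (fun g : G => g + g = 0), g := by
  rw [← Finset.sum_filter_add_sum_filter_not univ (fun g : G => g + g = 0) (fun g => g),
    cw_sum_filter_not, add_zero]

lemma cw_two_mul_nsmul (w : G) (hw : w + w = 0) (k : ℕ) : (2 * k) • w = 0 := by
  rw [two_mul, add_nsmul, ← smul_add, hw, smul_zero]

lemma cw_filter_card_sum (u : G) (hu : u ≠ 0) (hu2 : u + u = 0) :
    ∃ N : ℕ, (univ.filter (fun g : G => g + g = 0)).card = 2 * N ∧
      ∑ g ∈ univ.filter (fun g : G => g + g = 0), g = N • u := by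
  set H : Finset G := univ.filter (fun g : G => g + g = 0) with hH
  have hmemH : ∀ g : G, g ∈ H ↔ g + g = 0 := by
    intro g; simp [hH]
  have haddu : ∀ a : G, a ∈ H → a + u ∈ H := by
    intro a ha
    rw [hmemH] at ha ⊢
    rw [add_add_add_comm, ha, hu2, add_zero]
  set π : G → Finset G := fun h => {h, h + u} with hπ
  have hmaps : ∀ h ∈ H, π h ∈ H.image π := fun h hh => Finset.mem_image_of_mem π hh
  have hfiber : ∀ p ∈ H.image π, (∑ g ∈ H.filter (fun h => π h = p), g) = u ∧
      (H.filter (fun h => π h = p)).card = 2 := by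
    intro p hp
    obtain ⟨a, haH, rfl⟩ := Finset.mem_image.mp hp
    have hane : a ≠ a + u := by
      intro h
      exact hu (by simpa using h.symm)
    have hfe : H.filter (fun h => π h = π a) = {a, a + u} := by
      ext h
      simp only [Finset.mem_filter, Finset.mem_insert, Finset.mem_singleton]
      constructor
      · rintro ⟨hhH, hhp⟩
        have : h ∈ π h := by simp [hπ]
        rw [hhp] at this
        simpa [hπ] using this
      · rintro (rfl | rfl)
        · exact ⟨haH, rfl⟩
        · refine ⟨haddu a haH, ?_⟩
          simp only [hπ]
          rw [add_assoc, hu2, add_zero, Finset.pair_comm]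
    rw [hfe]
    constructor
    · rw [Finset.sum_pair hane, ← add_assoc, (hmemH a).mp haH, zero_add]
    · exact Finset.card_pair hane
  refine ⟨(H.image π).card, ?_, ?_⟩
  · rw [Finset.card_eq_sum_card_fiberwise hmaps]
    rw [Finset.sum_congr rfl (fun p hp => (hfiber p hp).2), Finset.sum_const, smul_eq_mul]
    ring
  · rw [← Finset.sum_fiberwise_of_maps_to hmaps (fun g => g)]
    rw [Finset.sum_congr rfl (fun p hp => (hfiber p hp).1), Finset.sum_const]

lemma cw_sum_zero_of_two (u v : G) (hu : u ≠ 0) (hu2 : u + u = 0)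
    (hv : v ≠ 0) (hv2 : v + v = 0) (huv : u ≠ v) : ∑ g : G, g = 0 := by
  obtain ⟨N, hNc, hNs⟩ := cw_filter_card_sum u hu hu2
  obtain ⟨M, hMc, hMs⟩ := cw_filter_card_sum v hv hv2
  have hNM : N = M := by omega
  subst hNM
  rcases Nat.even_or_odd N with ⟨k, hk⟩ | ⟨k, hk⟩
  · rw [cw_sum_univ_eq_sum_filter, hNs, hk, ← two_mul, cw_two_mul_nsmul u hu2]
  · exfalso
    apply huv
    have h1 : N • u = u := by
      rw [hk, succ_nsmul, cw_two_mul_nsmul u hu2, zero_add]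
    have h2 : N • v = v := by
      rw [hk, succ_nsmul, cw_two_mul_nsmul v hv2, zero_add]
    rw [← h1, ← h2, ← hNs, ← hMs]

lemma cw_sum_eq_invol (u : G) (hu : u ≠ 0) (hu2 : u + u = 0)
    (huniq : ∀ w : G, w ≠ 0 → w + w = 0 → w = u) : ∑ g : G, g = u := by
  rw [cw_sum_univ_eq_sum_filter]
  have hf : univ.filter (fun g : G => g + g = 0) = {0, u} := by
    ext g
    simp only [Finset.mem_filter, Finset.mem_univ, true_and, Finset.mem_insert,
      Finset.mem_singleton]
    constructor
    · intro h
      by_cases hg : g = 0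
      · exact Or.inl hg
      · exact Or.inr (huniq g hg h)
    · rintro (rfl | rfl)
      · simp
      · exact hu2
  rw [hf, Finset.sum_pair (Ne.symm hu), zero_add]

lemma cw_sum_eq_zero_iff :
    (∑ g : G, g = 0) ↔ ¬ ∃! u : G, u ≠ 0 ∧ u + u = 0 := by
  constructor
  · intro h hex
    obtain ⟨u, ⟨hu, hu2⟩, huniq⟩ := hex
    have hs := cw_sum_eq_invol u hu hu2 (fun w hw hw2 => huniq w ⟨hw, hw2⟩)
    exact hu (by rw [← hs, h])
  · intro h
    by_cases hex : ∃ u : G, u ≠ 0 ∧ u + u = 0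
    · obtain ⟨u, hu, hu2⟩ := hex
      have hv : ∃ v : G, (v ≠ 0 ∧ v + v = 0) ∧ v ≠ u := by
        by_contra hc
        push_neg at hc
        exact h ⟨u, ⟨hu, hu2⟩, fun v hv => hc v hv⟩
      obtain ⟨v, ⟨hv, hv2⟩, hvu⟩ := hv
      exact cw_sum_zero_of_two u v hu hu2 hv hv2 (Ne.symm hvu)
    · push_neg at hex
      rw [cw_sum_univ_eq_sum_filter]
      have hf : univ.filter (fun g : G => g + g = 0) = {0} := by
        ext g
        simp only [Finset.mem_filter, Finset.mem_univ, true_and, Finset.mem_singleton]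
        constructor
        · intro hg
          by_contra hg0
          exact hex g hg0 hg
        · rintro rfl; simp
      rw [hf, Finset.sum_singleton]

/-! ### A `1`-weight forces the sum of all elements to vanish -/

lemma cw_sum_zero_of_weight (θ : G × G → ℤ) (h : IsCayleyWeight θ 1) :
    ∑ g : G, g = 0 := by
  obtain ⟨hr, hc, hs⟩ := h
  have key1 : ∀ x : G, ∑ y : G, θ (x, y) • (x + y) = ∑ z : G, θ (x, z - x) • z := by
    intro x
    refine Fintype.sum_equiv (Equiv.addLeft x) _ _ (fun y => ?_)
    simp [Equiv.addLeft]
  have T1 : ∑ x : G, ∑ y : G, θ (x, y) • (x + y) = ∑ g : G, g := by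
    rw [Finset.sum_congr rfl (fun x _ => key1 x), Finset.sum_comm]
    have : ∀ z : G, ∑ x : G, θ (x, z - x) • z = z := by
      intro z
      rw [← Finset.sum_smul, hs z, one_smul]
    rw [Finset.sum_congr rfl (fun z _ => this z)]
  have T2 : ∑ x : G, ∑ y : G, θ (x, y) • (x + y) = (∑ g : G, g) + (∑ g : G, g) := by
    have expand : ∀ x y : G, θ (x, y) • (x + y) = θ (x, y) • x + θ (x, y) • y :=
      fun x y => smul_add _ _ _
    calc ∑ x : G, ∑ y : G, θ (x, y) • (x + y)
        = ∑ x : G, (∑ y : G, θ (x, y) • x + ∑ y : G, θ (x, y) • y) := by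
          refine Finset.sum_congr rfl (fun x _ => ?_)
          rw [← Finset.sum_add_distrib]
          exact Finset.sum_congr rfl (fun y _ => expand x y)
      _ = (∑ x : G, ∑ y : G, θ (x, y) • x) + ∑ x : G, ∑ y : G, θ (x, y) • y :=
          Finset.sum_add_distrib
      _ = (∑ g : G, g) + (∑ g : G, g) := by
          congr 1
          · exact Finset.sum_congr rfl fun x _ => by
              rw [← Finset.sum_smul, hr x, one_smul]
          · rw [Finset.sum_comm]
            exact Finset.sum_congr rfl fun y _ => by
              rw [← Finset.sum_smul, hc y, one_smul]
  have := T1.symm.trans T2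
  exact (left_eq_add.mp this)

/-! ### Construction of a `1`-weight when the sum of all elements vanishes -/

/-- The basic gadget: a rank-one `2 × 2` pattern with zero row and column sums. -/
def cwGad (g h : G) : G × G → ℤ := fun p =>
  ((if p.1 = 0 then (1 : ℤ) else 0) - (if p.1 = g then 1 else 0)) *
  ((if p.2 = 0 then (1 : ℤ) else 0) - (if p.2 = h then 1 else 0))

lemma cwGad_row (g h x : G) : ∑ y : G, cwGad g h (x, y) = 0 := by
  show ∑ y : G, ((if x = 0 then (1 : ℤ) else 0) - (if x = g then 1 else 0)) *
    ((if y = 0 then (1 : ℤ) else 0) - (if y = h then 1 else 0)) = 0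
  rw [← Finset.mul_sum]
  simp [Finset.sum_sub_distrib]

lemma cwGad_col (g h y : G) : ∑ x : G, cwGad g h (x, y) = 0 := by
  show ∑ x : G, ((if x = 0 then (1 : ℤ) else 0) - (if x = g then 1 else 0)) *
    ((if y = 0 then (1 : ℤ) else 0) - (if y = h then 1 else 0)) = 0
  rw [← Finset.sum_mul]
  simp [Finset.sum_sub_distrib]

lemma cwGad_sym (g h z : G) : ∑ x : G, cwGad g h (x, z - x) =
    (if z = 0 then 1 else 0) - (if z = h then 1 else 0)
      - (if z = g then 1 else 0) + (if z = g + h then 1 else 0) := by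
  have e3 : (z - g = 0) = (z = g) := by rw [eq_iff_iff, sub_eq_zero]
  have e4 : (z - g = h) = (z = g + h) := by rw [eq_iff_iff, sub_eq_iff_eq_add']
  calc ∑ x : G, cwGad g h (x, z - x)
      = ∑ x : G,
        ((if x = 0 then ((if z - x = 0 then (1 : ℤ) else 0) - (if z - x = h then 1 else 0))
          else 0)
        - (if x = g then ((if z - x = 0 then (1 : ℤ) else 0) - (if z - x = h then 1 else 0))
            else 0)) := by
        refine Finset.sum_congr rfl (fun x _ => ?_)
        show ((if x = 0 then (1 : ℤ) else 0) - (if x = g then 1 else 0)) *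
          ((if z - x = 0 then (1 : ℤ) else 0) - (if z - x = h then 1 else 0)) = _
        simp only [sub_mul, ite_mul, one_mul, zero_mul]
    _ = ((if z - 0 = 0 then (1 : ℤ) else 0) - (if z - 0 = h then 1 else 0))
        - ((if z - g = 0 then (1 : ℤ) else 0) - (if z - g = h then 1 else 0)) := by
        rw [Finset.sum_sub_distrib, Finset.sum_ite_eq' univ (0 : G),
          Finset.sum_ite_eq' univ g]
        simp
    _ = _ := by
        simp only [sub_zero, e3, e4]
        ring

/-- Accumulating gadgets along a list. -/
lemma cw_exists_aux (l : List G) : ∃ θ : G × G → ℤ,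
    (∀ x : G, ∑ y : G, θ (x, y) = 0) ∧ (∀ y : G, ∑ x : G, θ (x, y) = 0) ∧
    (∀ z : G, ∑ x : G, θ (x, z - x) =
      (l.map (fun a => if z = a then (1 : ℤ) else 0)).sum
        + (if z = 0 then 1 else 0) - (if z = l.sum then 1 else 0)
        - (l.length : ℤ) * (if z = 0 then 1 else 0)) := by
  induction l with
  | nil =>
    refine ⟨0, by simp, by simp, fun z => by by_cases hz : z = 0 <;> simp [hz]⟩
  | cons a t ih =>
    obtain ⟨θ, hr, hc, hs⟩ := ih
    refine ⟨θ - cwGad a t.sum, ?_, ?_, ?_⟩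
    · intro x
      simp only [Pi.sub_apply, Finset.sum_sub_distrib, hr x, cwGad_row, sub_zero]
    · intro y
      simp only [Pi.sub_apply, Finset.sum_sub_distrib, hc y, cwGad_col, sub_zero]
    · intro z
      simp only [Pi.sub_apply, Finset.sum_sub_distrib, hs z, cwGad_sym]
      simp only [List.map_cons, List.sum_cons, List.length_cons, List.sum_cons]
      push_cast
      by_cases hz : z = a + t.sum
      · simp only [eq_true hz, ↓reduceIte]; ring
      · simp only [eq_false hz, ↓reduceIte]; ring
  
lemma cw_exists_weight_of_sum_zero (h : ∑ g : G, g = 0) :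
    ∃ θ : G × G → ℤ, IsCayleyWeight θ 1 := by
  obtain ⟨θ, hr, hc, hs⟩ := cw_exists_aux (univ : Finset G).toList
  set n : ℤ := ((univ : Finset G).toList.length : ℤ) with hn
  have hcount : ∀ z : G,
      ((univ : Finset G).toList.map (fun a => if z = a then (1 : ℤ) else 0)).sum = 1 := by
    intro z
    rw [Finset.sum_map_toList univ (fun a => if z = a then (1 : ℤ) else 0)]
    simp
  have hlsum : (univ : Finset G).toList.sum = 0 := by
    rw [show (univ : Finset G).toList.sum
        = ((univ : Finset G).toList.map (fun a => a)).sum from by rw [List.map_id']]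
    rw [Finset.sum_map_toList univ (fun a => a)]
    exact h
  refine ⟨θ + fun p => if p.1 + p.2 = 0 then 1 else 0, ?_, ?_, ?_⟩
  · intro x
    simp only [Pi.add_apply, Finset.sum_add_distrib, hr x, zero_add]
    have : ∀ y : G, ((x + y = 0) = (y = -x)) := by
      intro y
      rw [eq_iff_iff]
      constructor
      · intro hxy; exact eq_neg_of_add_eq_zero_right hxy
      · rintro rfl; exact add_neg_cancel x
    simp only [this]
    simp
  · intro y
    simp only [Pi.add_apply, Finset.sum_add_distrib, hc y, zero_add]
    have : ∀ x : G, ((x + y = 0) = (x = -y)) := by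
      intro x
      rw [eq_iff_iff]
      constructor
      · intro hxy; exact eq_neg_of_add_eq_zero_left hxy
      · rintro rfl; exact neg_add_cancel y
    simp only [this]
    simp
  · intro z
    simp only [Pi.add_apply, Finset.sum_add_distrib, hs z, hcount z, hlsum]
    have : ∀ x : G, ((x + (z - x) = 0) = (z = 0)) := by
      intro x
      rw [eq_iff_iff, add_sub_cancel]
    simp only [this, Finset.sum_const, Finset.card_univ, smul_eq_mul]
    have hnn : n = (Fintype.card G : ℤ) := by
      rw [hn, Finset.length_toList, Finset.card_univ]
    rw [hnn]
    by_cases hz : z = 0 <;> simp [hz] <;> ring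

/-! ### Near weights vs weights -/

lemma cw_near_of_weight (θ : G × G → ℤ) (h : IsCayleyWeight θ 1) :
    IsNearOneWeight (θ - fun p => if p.1 = 0 ∧ p.2 = 0 then 1 else 0) 0 0 0 := by
  obtain ⟨hr, hc, hs⟩ := h
  refine ⟨fun x => ?_, fun y => ?_, fun z => ?_⟩
  · simp only [Pi.sub_apply, Finset.sum_sub_distrib, hr x]
    by_cases hx : x = 0 <;> simp [hx]
  · simp only [Pi.sub_apply, Finset.sum_sub_distrib, hc y]
    by_cases hy : y = 0 <;> simp [hy]
  · simp only [Pi.sub_apply, Finset.sum_sub_distrib, hs z]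
    have : ∀ x : G, ((x = 0 ∧ z - x = 0) = (x = 0 ∧ z = 0)) := by
      intro x
      rw [eq_iff_iff]
      constructor
      · rintro ⟨rfl, hzx⟩; exact ⟨rfl, by simpa [sub_zero] using hzx⟩
      · rintro ⟨rfl, rfl⟩; simp
    simp only [this]
    by_cases hz : z = 0 <;> simp [hz]

lemma cw_weight_of_near (θ : G × G → ℤ) (r c s : G) (h : IsNearOneWeight θ r c s)
    (heq : r + c = s) : IsCayleyWeight (θ + fun p => if p.1 = r ∧ p.2 = c then 1 else 0) 1 := by
  obtain ⟨hr, hc, hs⟩ := h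
  refine ⟨fun x => ?_, fun y => ?_, fun z => ?_⟩
  · simp only [Pi.add_apply, Finset.sum_add_distrib, hr x]
    by_cases hx : x = r <;> simp [hx]
  · simp only [Pi.add_apply, Finset.sum_add_distrib, hc y]
    by_cases hy : y = c <;> simp [hy]
  · simp only [Pi.add_apply, Finset.sum_add_distrib, hs z]
    have : ∀ x : G, ((x = r ∧ z - x = c) = (x = r ∧ z = s)) := by
      intro x
      rw [eq_iff_iff]
      constructor
      · rintro ⟨rfl, hzx⟩
        refine ⟨rfl, ?_⟩
        rw [← heq]
        rw [sub_eq_iff_eq_add'] at hzx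
        rw [hzx, add_comm]
      · rintro ⟨rfl, rfl⟩
        refine ⟨rfl, ?_⟩
        rw [← heq, add_sub_cancel_left]
    simp only [this]
    by_cases hz : z = s <;> simp [hz]

end Aux

theorem one_weight_iff_no_unique_involution {G : Type*} [AddCommGroup G] [Fintype G]
    [DecidableEq G] :
    ((∃ θ : G × G → ℤ, IsCayleyWeight θ 1) ↔ ¬ ∃! u : G, u ≠ 0 ∧ u + u = 0) ∧
    Xor' (∃ θ : G × G → ℤ, IsCayleyWeight θ 1)
      (∀ (θ : G × G → ℤ) (r c s : G), IsNearOneWeight θ r c s → r + c ≠ s) := by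
  have hiff : (∃ θ : G × G → ℤ, IsCayleyWeight θ 1) ↔ ¬ ∃! u : G, u ≠ 0 ∧ u + u = 0 := by
    constructor
    · rintro ⟨θ, hθ⟩
      exact cw_sum_eq_zero_iff.mp (cw_sum_zero_of_weight θ hθ)
    · intro h
      exact cw_exists_weight_of_sum_zero (cw_sum_eq_zero_iff.mpr h)
  refine ⟨hiff, ?_⟩
  by_cases h : ∃ θ : G × G → ℤ, IsCayleyWeight θ 1
  · left
    refine ⟨h, ?_⟩
    intro hall
    obtain ⟨θ, hθ⟩ := h
    exact hall _ 0 0 0 (cw_near_of_weight θ hθ) (by simp)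
  · right
    refine ⟨?_, h⟩
    intro θ r c s hn heq
    exact h ⟨_, cw_weight_of_near θ r c s hn heq⟩
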